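/- arXiv:2310.15903 — 3 statements merged into one kernel-verified Lean document; each statement's English description precedes it below -/
import Mathlib

section
/- Let Y_m be the K × C(K,m) indicator matrix of all m-subsets of [K] with 1 ≤ m ≤ K-1, let a = ((m-1)/(K-1))·C(K-1,m-1), b = (m/K)·C(K,m), c = (m/(K-1))·C(K-1,m), τ = (a+c)/(bc), η = −a/(bc), and Θ the all-ones matrix of size K × C(K,m). Then (τ·Y_m + η·Θ)·Y_m^T = I_K; that is, τ·Y_m^T + η·Θ^T is a right inverse of Y_m. -/
open Matrix

lemma aux_count {α : Type*} [DecidableEq α] (s t : Finset α) (n : ℕ) (hts : t ⊆ s)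
    (htn : t.card ≤ n) :
    ((s.powersetCard n).filter (fun S => t ⊆ S)).card
      = (s.card - t.card).choose (n - t.card) := by
  rw [← Finset.card_sdiff_of_subset hts, ← Finset.card_powersetCard]
  apply Finset.card_bij' (fun S _ => S \ t) (fun S _ => S ∪ t)
  · intro S hS
    simp only [Finset.mem_filter, Finset.mem_powersetCard] at hS
    obtain ⟨⟨hSs, hScard⟩, htS⟩ := hS
    rw [Finset.mem_powersetCard]
    constructor
    · intro x hx
      simp only [Finset.mem_sdiff] at hx ⊢
      exact ⟨hSs hx.1, hx.2⟩
    · rw [Finset.card_sdiff_of_subset htS, hScard]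
  · intro S hS
    rw [Finset.mem_powersetCard] at hS
    obtain ⟨hSs, hScard⟩ := hS
    have hdisj : Disjoint S t := by
      rw [Finset.disjoint_left]
      intro x hx
      exact (Finset.mem_sdiff.1 (hSs hx)).2
    simp only [Finset.mem_filter, Finset.mem_powersetCard]
    refine ⟨⟨Finset.union_subset (fun x hx => (Finset.mem_sdiff.1 (hSs hx)).1) hts, ?_⟩,
      Finset.subset_union_right⟩
    rw [Finset.card_union_of_disjoint hdisj, hScard]
    omega
  · intro S hS
    simp only [Finset.mem_filter, Finset.mem_powersetCard] at hS
    exact Finset.sdiff_union_of_subset hS.2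
  · intro S hS
    rw [Finset.mem_powersetCard] at hS
    have hdisj : Disjoint S t := by
      rw [Finset.disjoint_left]
      intro x hx
      exact (Finset.mem_sdiff.1 (hS.1 hx)).2
    rw [Finset.union_sdiff_distrib, Finset.sdiff_self, Finset.union_empty,
      Finset.sdiff_eq_self_of_disjoint hdisj]

/-- With `a = ((m-1)/(K-1))·C(K-1,m-1)`, `b = (m/K)·C(K,m)`, `c = (m/(K-1))·C(K-1,m)`,
`τ = (a+c)/(bc)`, `η = −a/(bc)`, the matrix `τ·Y_mᵀ + η·Θᵀ` is a right inverse of `Y_m`: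
`(τ·Y_m + η·Θ)·Y_mᵀ = I`. -/
theorem subset_indicator_right_inverse (K m : ℕ) (hm : 1 ≤ m) (hK : m ≤ K - 1)
    (Y Θ : Matrix (Fin K) ((Finset.univ : Finset (Fin K)).powersetCard m) ℝ)
    (hY : ∀ i S, Y i S = if i ∈ (S : Finset (Fin K)) then 1 else 0)
    (hΘ : ∀ i S, Θ i S = 1)
    (a b c : ℝ)
    (ha : a = ((m : ℝ) - 1) / ((K : ℝ) - 1) * ((K - 1).choose (m - 1)))
    (hb : b = (m : ℝ) / K * (K.choose m))
    (hc : c = (m : ℝ) / ((K : ℝ) - 1) * ((K - 1).choose m)) :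
    (((a + c) / (b * c)) • Y + (-(a / (b * c))) • Θ) * Yᵀ = (1 : Matrix (Fin K) (Fin K) ℝ) := by
  have hKm : m + 1 ≤ K := by omega
  have hK1 : (1 : ℝ) ≤ (K : ℝ) := by exact_mod_cast Nat.one_le_of_lt hKm
  have hK0 : (0 : ℝ) < (K : ℝ) := by positivity
  have hK1' : (0 : ℝ) < (K : ℝ) - 1 := by
    have h2 : (2 : ℕ) ≤ K := by omega
    have : (2 : ℝ) ≤ (K : ℝ) := by exact_mod_cast h2
    linarith
  -- n1 = C(K-1, m-1)
  set n1 : ℝ := (((K - 1).choose (m - 1) : ℕ) : ℝ) with hn1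
  have hn1pos : 0 < n1 := by
    rw [hn1]
    exact_mod_cast Nat.choose_pos (by omega)
  -- b = n1 : from m * C(K,m) = K * C(K-1,m-1)
  have hbn1 : b = n1 := by
    have hnat : m * K.choose m = K * (K - 1).choose (m - 1) := by
      have := Nat.add_one_mul_choose_eq (K - 1) (m - 1)
      have h1 : K - 1 + 1 = K := by omega
      have h2 : m - 1 + 1 = m := by omega
      rw [h1, h2] at this
      rw [Nat.mul_comm m]
      exact this.symm
    have : ((m : ℝ)) * (K.choose m : ℝ) = (K : ℝ) * n1 := by
      rw [hn1]; exact_mod_cast congrArg (Nat.cast (R := ℝ)) hnat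
    rw [hb]
    field_simp
    linarith [this]
  -- a + c = n1
  have hacn1 : a + c = n1 := by
    have hnat : (m - 1) * (K - 1).choose (m - 1) + m * (K - 1).choose m
        = (K - 1) * (K - 1).choose (m - 1) := by
      have h := Nat.choose_succ_right_eq (K - 1) (m - 1)
      have h2 : m - 1 + 1 = m := by omega
      rw [h2] at h
      -- h : (K-1).choose m * m = (K-1).choose (m-1) * (K-1-(m-1))
      have h3 : K - 1 - (m - 1) = K - m := by omega
      rw [h3] at h
      have h4 : m - 1 + (K - m) = K - 1 := by omega
      have h5 : m * (K - 1).choose m = (K - m) * (K - 1).choose (m - 1) := by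
        rw [Nat.mul_comm m, h, Nat.mul_comm]
      rw [h5, ← Nat.add_mul, h4]
    have hcast : ((m : ℝ) - 1) * n1 + (m : ℝ) * ((K - 1).choose m : ℝ)
        = ((K : ℝ) - 1) * n1 := by
      have hm1 : ((m - 1 : ℕ) : ℝ) = (m : ℝ) - 1 := by
        rw [Nat.cast_sub hm]; norm_num
      have hK1c : ((K - 1 : ℕ) : ℝ) = (K : ℝ) - 1 := by
        rw [Nat.cast_sub (by omega)]; norm_num
      have := congrArg (Nat.cast (R := ℝ)) hnat
      push_cast at this
      rw [hm1, hK1c] at this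
      rw [hn1]; linarith [this]
    rw [ha, hc]
    field_simp
    linarith [hcast]
  have hb0 : b ≠ 0 := by rw [hbn1]; exact ne_of_gt hn1pos
  have hc0 : c ≠ 0 := by
    rw [hc]
    have hmpos : (0 : ℝ) < (m : ℝ) := by exact_mod_cast hm
    have : (0 : ℕ) < (K - 1).choose m := Nat.choose_pos hK
    have hch : (0 : ℝ) < ((K - 1).choose m : ℝ) := by exact_mod_cast this
    positivity
  -- counting
  have hcard_univ : (Finset.univ : Finset (Fin K)).card = K := Finset.card_univ.trans (Fintype.card_fin K)
  have hcount1 : ∀ i : Fin K,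
      (((Finset.univ : Finset (Fin K)).powersetCard m).filter (fun S => i ∈ S)).card
        = (K - 1).choose (m - 1) := by
    intro i
    have := aux_count (Finset.univ : Finset (Fin K)) {i} m (Finset.subset_univ _)
      (by simpa using hm)
    simp only [Finset.card_singleton, hcard_univ] at this
    rw [← this]
    congr 1
    apply Finset.filter_congr
    intro S _
    simp [Finset.singleton_subset_iff]
  ext i j
  rw [Matrix.mul_apply, Matrix.one_apply]
  simp only [Matrix.add_apply, Matrix.smul_apply, Matrix.transpose_apply, hY, hΘ, smul_eq_mul,
    mul_one]
  have hsum : ∀ f : Finset (Fin K) → ℝ,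
      (∑ S : ((Finset.univ : Finset (Fin K)).powersetCard m), f (S : Finset (Fin K)))
        = ∑ S ∈ (Finset.univ : Finset (Fin K)).powersetCard m, f S := by
    intro f
    exact Finset.sum_coe_sort _ f
  rw [hsum (fun S => ((a + c) / (b * c) * (if i ∈ S then 1 else 0) + -(a / (b * c)))
      * (if j ∈ S then 1 else 0))]
  have hexpand : ∀ S : Finset (Fin K),
      ((a + c) / (b * c) * (if i ∈ S then 1 else 0) + -(a / (b * c)))
        * (if j ∈ S then 1 else 0)
      = (a + c) / (b * c) * (if i ∈ S ∧ j ∈ S then 1 else 0)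
        + -(a / (b * c)) * (if j ∈ S then 1 else 0) := by
    intro S
    by_cases h1 : i ∈ S <;> by_cases h2 : j ∈ S <;> simp [h1, h2]
  rw [Finset.sum_congr rfl (fun S _ => hexpand S), Finset.sum_add_distrib,
    ← Finset.mul_sum, ← Finset.mul_sum, Finset.sum_boole, Finset.sum_boole]
  rw [hcount1 j]
  by_cases hij : i = j
  · subst hij
    rw [if_pos rfl]
    have heq : Finset.filter (fun S => i ∈ S ∧ i ∈ S)
        ((Finset.univ : Finset (Fin K)).powersetCard m)
        = Finset.filter (fun S => i ∈ S) ((Finset.univ : Finset (Fin K)).powersetCard m) := by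
      apply Finset.filter_congr
      intro S _
      simp
    rw [heq, hcount1 i]
    rw [← hn1]
    have hn1ne : n1 ≠ 0 := ne_of_gt hn1pos
    have hsimp : (a + c) / (b * c) * n1 + -(a / (b * c)) * n1 = c / (b * c) * n1 := by
      ring
    rw [hsimp, hbn1]
    field_simp
  · simp only [if_neg hij]
    -- off diagonal
    have hfilter2 : (((Finset.univ : Finset (Fin K)).powersetCard m).filter
        (fun S => i ∈ S ∧ j ∈ S)).card = if 2 ≤ m then (K - 2).choose (m - 2) else 0 := by
      by_cases h2m : 2 ≤ m
      · rw [if_pos h2m]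
        have := aux_count (Finset.univ : Finset (Fin K)) {i, j} m (Finset.subset_univ _)
          (by rw [Finset.card_insert_of_notMem (by simpa using hij), Finset.card_singleton]
              exact h2m)
        rw [Finset.card_insert_of_notMem (by simpa using hij), Finset.card_singleton,
          hcard_univ] at this
        rw [← this]
        congr 1
        apply Finset.filter_congr
        intro S _
        simp [Finset.insert_subset_iff, Finset.singleton_subset_iff]
      · rw [if_neg h2m]
        have hm1 : m = 1 := by omega
        rw [Finset.card_eq_zero, Finset.filter_eq_empty_iff]
        intro S hS
        rw [Finset.mem_powersetCard] at hS
        rintro ⟨hiS, hjS⟩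
        have : ({i, j} : Finset (Fin K)) ⊆ S := by
          intro x hx
          simp only [Finset.mem_insert, Finset.mem_singleton] at hx
          rcases hx with rfl | rfl <;> assumption
        have hle := Finset.card_le_card this
        rw [Finset.card_insert_of_notMem (by simpa using hij), Finset.card_singleton,
          hS.2, hm1] at hle
        omega
    rw [hfilter2]
    -- Need: τ * n2 + η * n1 = 0 where n2 is the count and a = n2
    have han2 : a = ((if 2 ≤ m then (K - 2).choose (m - 2) else 0 : ℕ) : ℝ) := by
      by_cases h2m : 2 ≤ m
      · rw [if_pos h2m]
        have hnat : (m - 1) * (K - 1).choose (m - 1) = (K - 1) * (K - 2).choose (m - 2) := by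
          have := Nat.add_one_mul_choose_eq (K - 2) (m - 2)
          have h1 : K - 2 + 1 = K - 1 := by omega
          have h2 : m - 2 + 1 = m - 1 := by omega
          rw [h1, h2] at this
          rw [Nat.mul_comm (m - 1)]
          exact this.symm
        have hm1 : ((m - 1 : ℕ) : ℝ) = (m : ℝ) - 1 := by
          rw [Nat.cast_sub hm]; norm_num
        have hK1c : ((K - 1 : ℕ) : ℝ) = (K : ℝ) - 1 := by
          rw [Nat.cast_sub (by omega)]; norm_num
        have hcast := congrArg (Nat.cast (R := ℝ)) hnat
        push_cast at hcast
        rw [hm1, hK1c] at hcast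
        rw [ha]
        rw [div_mul_eq_mul_div, div_eq_iff (ne_of_gt hK1')]
        linarith [hcast]
      · rw [if_neg h2m]
        have hm1 : m = 1 := by omega
        rw [ha, hm1]
        norm_num
    rw [← han2, ← hn1, ← hacn1]
    field_simp
    ring
end

section
/- Let S ⊆ [K] with |S| = m, 1 ≤ m < K. For every z ∈ ℝ^K and every c > 0, L_PAL(z, S) ≥ (1/(1+c))·(m/(K−m))·⟨𝟏 − (K/m)·𝕀_S, z⟩ + c₂, where c₂ = (cm/(c+1))·log m + (mc/(1+c))·log((c+1)/c) + (m/(c+1))·log((K−m)(c+1)). -/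
/-- Lower bound for the pick-all-labels cross-entropy: for `S ⊆ [K]` with `|S| = m`,
`1 ≤ m < K`, every `z ∈ ℝ^K` and `c > 0`,
`L_PAL(z,S) ≥ (1/(1+c))·(m/(K−m))·⟨𝟏 − (K/m)·𝕀_S, z⟩ + c₂` where
`c₂ = (cm/(c+1))·log m + (mc/(1+c))·log((c+1)/c) + (m/(c+1))·log((K−m)(c+1))`. -/
theorem pal_lower_bound (K m : ℕ) (hm : 1 ≤ m) (hmK : m < K)
    (S : Finset (Fin K)) (hS : S.card = m) (z : Fin K → ℝ) (c : ℝ) (hc : 0 < c) :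
    (∑ k ∈ S, -Real.log (Real.exp (z k) / ∑ ℓ, Real.exp (z ℓ)))
      ≥ (1 / (1 + c)) * ((m : ℝ) / ((K : ℝ) - m)) *
          (∑ j, (1 - (K : ℝ) / m * (if j ∈ S then 1 else 0)) * z j)
        + (c * m / (c + 1) * Real.log m
            + m * c / (1 + c) * Real.log ((c + 1) / c)
            + (m : ℝ) / (c + 1) * Real.log (((K : ℝ) - m) * (c + 1))) := by
  have hc1 : (0:ℝ) < 1 + c := by linarith
  have hm' : (0:ℝ) < m := by exact_mod_cast Nat.lt_of_lt_of_le Nat.zero_lt_one hm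
  have hKm : (0:ℝ) < (K:ℝ) - m := by
    have : (m:ℝ) < K := by exact_mod_cast hmK
    linarith
  have hKpos : 0 < K := Nat.lt_of_le_of_lt (Nat.zero_le m) hmK
  set T := ∑ ℓ, Real.exp (z ℓ) with hTdef
  have hT : 0 < T := Finset.sum_pos (fun i _ => Real.exp_pos _)
    (Finset.univ_nonempty_iff.mpr ⟨⟨0, hKpos⟩⟩)
  set a : ℝ := c / ((1 + c) * m) with ha
  set b : ℝ := 1 / ((1 + c) * ((K:ℝ) - m)) with hb
  have hapos : 0 < a := by positivity
  have hbpos : 0 < b := by positivity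
  set p : Fin K → ℝ := fun j => if j ∈ S then a else b with hp
  have hppos : ∀ j, 0 < p j := by
    intro j; simp only [hp]; split <;> assumption
  set A := ∑ k ∈ S, z k with hA
  set B := ∑ k ∈ Sᶜ, z k with hB
  have hcardc : Sᶜ.card = K - m := by rw [Finset.card_compl, hS, Fintype.card_fin]
  have hcardc' : ((Sᶜ.card : ℕ) : ℝ) = (K:ℝ) - m := by
    rw [hcardc]; push_cast [Nat.cast_sub hmK.le]; ring
  -- generic splitting of a sum over `univ` into `S` and `Sᶜ`
  have hsplit : ∀ (f g : Fin K → ℝ),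
      ∑ j, (if j ∈ S then f j else g j) = ∑ j ∈ S, f j + ∑ j ∈ Sᶜ, g j := by
    intro f g
    rw [← Finset.sum_add_sum_compl S]
    congr 1
    · exact Finset.sum_congr rfl fun j hj => if_pos hj
    · exact Finset.sum_congr rfl fun j hj => if_neg (Finset.mem_compl.mp hj)
  -- LHS rewrite
  have hLHS : (∑ k ∈ S, -Real.log (Real.exp (z k) / T)) = m * Real.log T - A := by
    have hterm : ∀ k ∈ S, -Real.log (Real.exp (z k) / T) = Real.log T - z k := by
      intro k _
      rw [Real.log_div (Real.exp_ne_zero _) (ne_of_gt hT), Real.log_exp]; ring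
    rw [Finset.sum_congr rfl hterm, Finset.sum_sub_distrib, Finset.sum_const, hS,
      nsmul_eq_mul, hA]
  -- Gibbs inequality
  have hgibbs : ∑ j, p j * (z j - Real.log (p j)) ≤ Real.log T := by
    have key : ∀ j : Fin K, p j * (z j - Real.log (p j)) - p j * Real.log T
        ≤ Real.exp (z j) / T - p j := by
      intro j
      have hpj := hppos j
      have h1 : Real.log (Real.exp (z j) / (p j * T)) ≤ Real.exp (z j) / (p j * T) - 1 :=
        Real.log_le_sub_one_of_pos (by positivity)
      have h2 : Real.log (Real.exp (z j) / (p j * T))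
          = z j - Real.log (p j) - Real.log T := by
        rw [Real.log_div (Real.exp_ne_zero _) (by positivity),
          Real.log_mul (ne_of_gt hpj) (ne_of_gt hT), Real.log_exp]
        ring
      have h3 : p j * (Real.exp (z j) / (p j * T) - 1) = Real.exp (z j) / T - p j := by
        field_simp
      have h4 := mul_le_mul_of_nonneg_left h1 (le_of_lt hpj)
      rw [h2, h3] at h4
      linarith
    have hsum := Finset.sum_le_sum (fun j (_ : j ∈ Finset.univ) => key j)
    rw [Finset.sum_sub_distrib, Finset.sum_sub_distrib, ← Finset.sum_div,
      div_self (ne_of_gt hT), ← Finset.sum_mul] at hsum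
    have hpsum : ∑ j, p j = (m:ℝ) * a + ((K:ℝ) - m) * b := by
      rw [hp]
      rw [hsplit (fun _ => a) (fun _ => b), Finset.sum_const, Finset.sum_const, hS,
        nsmul_eq_mul, nsmul_eq_mul, hcardc']
    have hone : (m:ℝ) * a + ((K:ℝ) - m) * b = 1 := by
      rw [ha, hb]; field_simp; ring
    rw [hpsum, hone] at hsum
    linarith
  -- compute the Gibbs sum
  have hgsum : ∑ j, p j * (z j - Real.log (p j))
      = (a * A - (m:ℝ) * (a * Real.log a)) + (b * B - ((K:ℝ) - m) * (b * Real.log b)) := by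
    have h1 : ∀ j ∈ Finset.univ, p j * (z j - Real.log (p j))
        = if j ∈ S then a * (z j - Real.log a) else b * (z j - Real.log b) := by
      intro j _; simp only [hp]; by_cases hj : j ∈ S <;> simp [hj]
    rw [Finset.sum_congr rfl h1, hsplit]
    have h2 : ∑ j ∈ S, a * (z j - Real.log a) = a * A - (m:ℝ) * (a * Real.log a) := by
      rw [← Finset.mul_sum, Finset.sum_sub_distrib, Finset.sum_const, hS, nsmul_eq_mul, hA]
      ring
    have h3 : ∑ j ∈ Sᶜ, b * (z j - Real.log b)
        = b * B - ((K:ℝ) - m) * (b * Real.log b) := by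
      rw [← Finset.mul_sum, Finset.sum_sub_distrib, Finset.sum_const, nsmul_eq_mul,
        hcardc', hB]
      ring
    rw [h2, h3]
  -- RHS linear term rewrite
  have hRsum : (∑ j, (1 - (K : ℝ) / m * (if j ∈ S then 1 else 0)) * z j)
      = (A + B) - (K:ℝ) / m * A := by
    have h1 : ∀ j ∈ Finset.univ, (1 - (K : ℝ) / m * (if j ∈ S then 1 else 0)) * z j
        = if j ∈ S then (1 - (K:ℝ)/m) * z j else z j := by
      intro j _; by_cases hj : j ∈ S <;> simp [hj]
    rw [Finset.sum_congr rfl h1, hsplit, ← Finset.mul_sum, ← hA, ← hB]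
    ring
  -- log expansions
  have hla : Real.log a = Real.log c - (Real.log (1 + c) + Real.log m) := by
    rw [ha, Real.log_div (ne_of_gt hc) (by positivity),
      Real.log_mul (ne_of_gt hc1) (ne_of_gt hm')]
  have hlb : Real.log b = -(Real.log (1 + c) + Real.log ((K:ℝ) - m)) := by
    rw [hb, one_div, Real.log_inv, Real.log_mul (ne_of_gt hc1) (ne_of_gt hKm)]
  have hl1 : Real.log ((c + 1) / c) = Real.log (1 + c) - Real.log c := by
    rw [Real.log_div (by positivity) (ne_of_gt hc), add_comm c 1]
  have hl2 : Real.log (((K:ℝ) - m) * (c + 1))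
      = Real.log ((K:ℝ) - m) + Real.log (1 + c) := by
    rw [show c + 1 = 1 + c from by ring, Real.log_mul (ne_of_gt hKm) (ne_of_gt hc1)]
  -- the key algebraic identity
  have hne1 : (1 + c) ≠ 0 := ne_of_gt hc1
  have hne2 : (c + 1) ≠ 0 := by linarith
  have hne3 : (m:ℝ) ≠ 0 := ne_of_gt hm'
  have hne4 : (K:ℝ) - m ≠ 0 := ne_of_gt hKm
  have heq : (m:ℝ) * ((a * A - (m:ℝ) * (a * Real.log a))
        + (b * B - ((K:ℝ) - m) * (b * Real.log b))) - A
      = (1 / (1 + c)) * ((m : ℝ) / ((K : ℝ) - m)) * ((A + B) - (K:ℝ) / m * A)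
        + (c * m / (c + 1) * Real.log m
            + m * c / (1 + c) * Real.log ((c + 1) / c)
            + (m : ℝ) / (c + 1) * Real.log (((K : ℝ) - m) * (c + 1))) := by
    rw [hla, hlb, hl1, hl2, ha, hb]
    field_simp
    ring
  -- conclude
  rw [ge_iff_le, hLHS, hRsum, ← heq]
  have := mul_le_mul_of_nonneg_left (hgsum ▸ hgibbs) (le_of_lt hm')
  linarith
end

section
/- In the lower bound L_PAL(z, S) ≥ γ·⟨𝟏 − (K/m)·𝕀_S, z⟩ + c₂ with γ = (1/(1+c))·(m/(K−m)) and c₂ as specified, equality holds if and only if z is constant equal to z_in on S, constant equal to z_out on S^c, and z_in − z_out = log(((K−m)/m)·c). -/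
private lemma exp_eq_one_add_iff {x : ℝ} : Real.exp x = 1 + x ↔ x = 0 := by
  constructor
  · intro h
    by_contra hx
    have := Real.add_one_lt_exp hx
    linarith
  · rintro rfl; simp

private lemma jensen_exp_core {ι : Type*} [Fintype ι] (q v : ι → ℝ) (hq : ∀ k, 0 < q k)
    (hq1 : ∑ k, q k = 1) (hμ : ∑ k, q k * v k = 0) :
    (∑ k, q k * Real.exp (v k)) = 1 ↔ ∀ k, v k = 0 := by
  have hle : ∀ k ∈ Finset.univ, q k * (1 + v k) ≤ q k * Real.exp (v k) := by
    intro k _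
    have h1 := Real.add_one_le_exp (v k)
    nlinarith [hq k]
  have hsum : ∑ k, q k * (1 + v k) = 1 := by
    have : ∀ k, q k * (1 + v k) = q k + q k * v k := by intro k; ring
    rw [Finset.sum_congr rfl (fun k _ => this k), Finset.sum_add_distrib, hq1, hμ]
    ring
  constructor
  · intro h
    have heq : ∑ k, q k * (1 + v k) = ∑ k, q k * Real.exp (v k) := by rw [h, hsum]
    have hall := (Finset.sum_eq_sum_iff_of_le hle).1 heq
    intro k
    have hk := hall k (Finset.mem_univ k)
    have h2 : 1 + v k = Real.exp (v k) := mul_left_cancel₀ (hq k).ne' hk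
    exact exp_eq_one_add_iff.1 h2.symm
  · intro h
    have : ∀ k, q k * Real.exp (v k) = q k := by
      intro k; rw [h k]; simp
    rw [Finset.sum_congr rfl (fun k _ => this k), hq1]

/-- Equality case of the pick-all-labels lower bound: with
`γ = (1/(1+c))·(m/(K−m))` and `c₂` as specified, equality holds iff `z` equals a constant
`z_in` on `S`, a constant `z_out` on `S^c`, and `z_in − z_out = log(((K−m)/m)·c)`. -/
theorem pal_lower_bound_equality_iff (K m : ℕ) (hm : 1 ≤ m) (hmK : m < K)
    (S : Finset (Fin K)) (hS : S.card = m) (z : Fin K → ℝ) (c : ℝ) (hc : 0 < c) :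
    ((∑ k ∈ S, -Real.log (Real.exp (z k) / ∑ ℓ, Real.exp (z ℓ)))
      = (1 / (1 + c)) * ((m : ℝ) / ((K : ℝ) - m)) *
          (∑ j, (1 - (K : ℝ) / m * (if j ∈ S then 1 else 0)) * z j)
        + (c * m / (c + 1) * Real.log m
            + m * c / (1 + c) * Real.log ((c + 1) / c)
            + (m : ℝ) / (c + 1) * Real.log (((K : ℝ) - m) * (c + 1))))
    ↔ ∃ zin zout : ℝ,
        (∀ i ∈ S, z i = zin) ∧ (∀ i ∉ S, z i = zout) ∧
        zin - zout = Real.log ((((K : ℝ) - m) / m) * c) := by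
  classical
  have hm0 : (0:ℝ) < m := by exact_mod_cast Nat.lt_of_lt_of_le Nat.zero_lt_one hm
  have hmKR : (m:ℝ) < K := by exact_mod_cast hmK
  have hKm : (0:ℝ) < (K:ℝ) - m := by linarith
  have hc1 : (0:ℝ) < 1 + c := by linarith
  have hK0 : 0 < K := Nat.lt_of_le_of_lt (Nat.zero_le m) hmK
  haveI : Nonempty (Fin K) := Fin.pos_iff_nonempty.mp hK0
  set w := ∑ ℓ, Real.exp (z ℓ) with hw_def
  have hw : 0 < w := Finset.sum_pos (fun _ _ => Real.exp_pos _) Finset.univ_nonempty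
  set qS : ℝ := c / ((1 + c) * m) with hqS_def
  set qO : ℝ := 1 / ((1 + c) * ((K:ℝ) - m)) with hqO_def
  have hqS : 0 < qS := div_pos hc (mul_pos hc1 hm0)
  have hqO : 0 < qO := div_pos one_pos (mul_pos hc1 hKm)
  set q : Fin K → ℝ := fun k => if k ∈ S then qS else qO with hq_def
  have hq : ∀ k, 0 < q k := by
    intro k; simp only [hq_def]; split <;> assumption
  have hSc : ((Sᶜ.card : ℕ) : ℝ) = (K:ℝ) - m := by
    rw [Finset.card_compl, hS]
    simp [Nat.cast_sub (le_of_lt hmK)]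
  -- splitting a weighted sum
  have hsplit : ∀ f : Fin K → ℝ,
      ∑ k, q k * f k = qS * (∑ k ∈ S, f k) + qO * (∑ k ∈ Sᶜ, f k) := by
    intro f
    rw [← Finset.sum_add_sum_compl S (fun k => q k * f k)]
    congr 1
    · rw [Finset.mul_sum]
      exact Finset.sum_congr rfl (fun k hk => by simp [hq_def, hk])
    · rw [Finset.mul_sum]
      exact Finset.sum_congr rfl (fun k hk => by
        simp [hq_def, (Finset.mem_compl.mp hk)])
  have hq1 : ∑ k, q k = 1 := by
    have := hsplit (fun _ => 1)
    simp only [mul_one] at this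
    rw [this]
    simp only [Finset.sum_const, nsmul_eq_mul, mul_one, hS, hSc]
    rw [hqS_def, hqO_def]
    field_simp
    ring
  set A := ∑ k ∈ S, z k with hA_def
  set Bv := ∑ k ∈ Sᶜ, z k with hB_def
  set μ : ℝ := qS * A + qO * Bv -
      ((m:ℝ) * (qS * Real.log qS) + ((K:ℝ) - m) * (qO * Real.log qO)) with hμ_def
  -- log expansions
  have hlogqS : Real.log qS = Real.log c - (Real.log (1+c) + Real.log m) := by
    rw [hqS_def, Real.log_div hc.ne' (mul_pos hc1 hm0).ne',
      Real.log_mul hc1.ne' hm0.ne']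
  have hlogqO : Real.log qO = -(Real.log (1+c) + Real.log ((K:ℝ)-m)) := by
    rw [hqO_def, one_div, Real.log_inv, Real.log_mul hc1.ne' hKm.ne']
  have hlog1 : Real.log ((c+1)/c) = Real.log (1+c) - Real.log c := by
    rw [Real.log_div (by linarith) hc.ne', add_comm c 1]
  have hlog2 : Real.log (((K:ℝ)-m) * (c+1)) = Real.log ((K:ℝ)-m) + Real.log (1+c) := by
    rw [Real.log_mul hKm.ne' (by linarith : c + 1 ≠ 0), add_comm c 1]
  have hlog3 : Real.log ((((K:ℝ) - m) / m) * c)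
      = Real.log ((K:ℝ)-m) - Real.log m + Real.log c := by
    rw [Real.log_mul (div_ne_zero hKm.ne' hm0.ne') hc.ne', Real.log_div hKm.ne' hm0.ne']
  -- LHS rewrite
  have hLHS : (∑ k ∈ S, -Real.log (Real.exp (z k) / w)) = m * Real.log w - A := by
    rw [Finset.sum_congr rfl (fun k _ => by
      rw [Real.log_div (Real.exp_ne_zero _) hw.ne', Real.log_exp, neg_sub] :
      ∀ k ∈ S, -Real.log (Real.exp (z k) / w) = Real.log w - z k)]
    rw [Finset.sum_sub_distrib, Finset.sum_const, hS, nsmul_eq_mul]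
  -- RHS rewrite
  have hind : (∑ j, (1 - (K : ℝ) / m * (if j ∈ S then 1 else 0)) * z j)
      = (A + Bv) - (K:ℝ)/m * A := by
    have e1 : ∀ j, (1 - (K : ℝ) / m * (if j ∈ S then 1 else 0)) * z j
        = z j - (K:ℝ)/m * (if j ∈ S then z j else 0) := by
      intro j; split <;> ring
    rw [Finset.sum_congr rfl (fun j _ => e1 j), Finset.sum_sub_distrib,
      ← Finset.mul_sum]
    congr 1
    · rw [← Finset.sum_add_sum_compl S z]
    · congr 1
      rw [Finset.sum_ite_mem, Finset.univ_inter]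
  have hRHS : (1 / (1 + c)) * ((m : ℝ) / ((K : ℝ) - m)) *
          (∑ j, (1 - (K : ℝ) / m * (if j ∈ S then 1 else 0)) * z j)
        + (c * m / (c + 1) * Real.log m
            + m * c / (1 + c) * Real.log ((c + 1) / c)
            + (m : ℝ) / (c + 1) * Real.log (((K : ℝ) - m) * (c + 1)))
      = (m:ℝ) * μ - A := by
    rw [hind, hμ_def, hlogqS, hlogqO, hlog1, hlog2, hqS_def, hqO_def]
    field_simp
    ring
  rw [hLHS, hRHS, sub_left_inj, mul_right_inj' hm0.ne']
  -- now: log w = μ ↔ ∃ ...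
  set v : Fin K → ℝ := fun k => z k - Real.log (q k) - μ with hv_def
  have hqlog : ∑ k, q k * Real.log (q k)
      = (m:ℝ) * (qS * Real.log qS) + ((K:ℝ)-m) * (qO * Real.log qO) := by
    rw [hsplit (fun k => Real.log (q k))]
    have e1 : ∑ k ∈ S, Real.log (q k) = (m:ℝ) * Real.log qS := by
      rw [Finset.sum_congr rfl (fun k hk => by simp [hq_def, hk] :
        ∀ k ∈ S, Real.log (q k) = Real.log qS), Finset.sum_const, hS, nsmul_eq_mul]
    have e2 : ∑ k ∈ Sᶜ, Real.log (q k) = ((K:ℝ)-m) * Real.log qO := by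
      rw [Finset.sum_congr rfl (fun k hk => by
        simp [hq_def, Finset.mem_compl.mp hk] :
        ∀ k ∈ Sᶜ, Real.log (q k) = Real.log qO), Finset.sum_const, nsmul_eq_mul, hSc]
    rw [e1, e2]; ring
  have hμ0 : ∑ k, q k * v k = 0 := by
    have : ∀ k, q k * v k = q k * z k - q k * Real.log (q k) - q k * μ := by
      intro k; simp only [hv_def]; ring
    rw [Finset.sum_congr rfl (fun k _ => this k), Finset.sum_sub_distrib,
      Finset.sum_sub_distrib, hqlog, hsplit z, ← Finset.sum_mul, hq1, hμ_def]
    ring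
  have hexp : ∑ k, q k * Real.exp (v k) = w * Real.exp (-μ) := by
    have : ∀ k, q k * Real.exp (v k) = Real.exp (z k) * Real.exp (-μ) := by
      intro k
      simp only [hv_def]
      rw [show z k - Real.log (q k) - μ = z k + (-Real.log (q k)) + (-μ) by ring,
        Real.exp_add, Real.exp_add, Real.exp_neg (Real.log (q k)), Real.exp_log (hq k)]
      field_simp
      exact div_self (hq k).ne'
    rw [Finset.sum_congr rfl (fun k _ => this k), ← Finset.sum_mul, hw_def]
  have step1 : Real.log w = μ ↔ ∑ k, q k * Real.exp (v k) = 1 := by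
    rw [hexp, Real.exp_neg, mul_inv_eq_one₀ (Real.exp_ne_zero μ)]
    constructor
    · intro h; rw [← h, Real.exp_log hw]
    · intro h; rw [h, Real.log_exp]
  rw [step1, jensen_exp_core q v hq hq1 hμ0]
  -- final structural iff
  constructor
  · intro hall
    refine ⟨Real.log qS + μ, Real.log qO + μ, ?_, ?_, ?_⟩
    · intro i hi
      have := hall i
      simp only [hv_def] at this
      simp only [hq_def, if_pos hi] at this
      linarith
    · intro i hi
      have := hall i
      simp only [hv_def] at this
      simp only [hq_def, if_neg hi] at this
      linarith
    · rw [hlogqS, hlogqO, hlog3]; ring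
  · rintro ⟨zin, zout, h1, h2, h3⟩
    rw [hlog3] at h3
    have hA : A = (m:ℝ) * zin := by
      rw [hA_def, Finset.sum_congr rfl h1, Finset.sum_const, hS, nsmul_eq_mul]
    have hB : Bv = ((K:ℝ) - m) * zout := by
      rw [hB_def, Finset.sum_congr rfl (fun i hi => h2 i (Finset.mem_compl.mp hi)),
        Finset.sum_const, nsmul_eq_mul, hSc]
    have hμval : μ = zin - Real.log qS := by
      rw [hμ_def, hA, hB, hlogqS, hlogqO, hqS_def, hqO_def]
      have h3' : zin = zout + (Real.log ((K:ℝ)-m) - Real.log m + Real.log c) := by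
        linarith
      rw [h3']
      field_simp
      ring
    intro k
    simp only [hv_def]
    by_cases hk : k ∈ S
    · simp only [hq_def, if_pos hk]
      rw [h1 k hk, hμval]; ring
    · simp only [hq_def, if_neg hk]
      rw [h2 k hk, hμval, hlogqS, hlogqO]
      linarith
end
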